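/- Let (Ω, 𝓕, ℙ) be a probability space, 𝒢 ⊆ 𝓕 a sub-σ-algebra, and X, Y : Ω → ℝ^d random vectors whose components are square-integrable, with X measurable with respect to 𝒢. Let M be a real d×d matrix such that the (componentwise) conditional expectation satisfies E[Y | 𝒢] = Mᵀ X almost surely. Then Mᵀ E[XXᵀ] M ⪯ E[YYᵀ] in the Loewner order; consequently, if E[XXᵀ] and E[YYᵀ] are positive definite, then ‖(E[XXᵀ])^{1/2} M (E[YYᵀ])^{-1/2}‖ ≤ 1. -/

import Mathlib

open Matrix MeasureTheory

/-- The spectral norm (ℓ²→ℓ² operator norm) of a real square matrix. -/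
noncomputable def specNorm {d : ℕ} (A : Matrix (Fin d) (Fin d) ℝ) : ℝ :=
  ‖Matrix.toEuclideanCLM (𝕜 := ℝ) A‖

open Classical in
/-- The positive semidefinite square root of a positive semidefinite real matrix
(junk value `0` on matrices that are not positive semidefinite). -/
noncomputable def msqrt {d : ℕ} (A : Matrix (Fin d) (Fin d) ℝ) : Matrix (Fin d) (Fin d) ℝ :=
  if h : A.PosSemidef then
    (h.1.eigenvectorUnitary : Matrix (Fin d) (Fin d) ℝ) *
      diagonal (fun i => Real.sqrt (h.1.eigenvalues i)) *
      (star h.1.eigenvectorUnitary : Matrix (Fin d) (Fin d) ℝ)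
  else 0


lemma int_mul2 {Ω : Type*} [MeasurableSpace Ω] {μ : Measure Ω} {f g : Ω → ℝ}
    (hf : MemLp f 2 μ) (hg : MemLp g 2 μ) : Integrable (fun ω => f ω * g ω) μ := by
  have h1 : Integrable (fun ω => (f ω + g ω) ^ 2) μ := (hf.add hg).integrable_sq
  have : (fun ω => f ω * g ω) = fun ω => ((f ω + g ω) ^ 2 - f ω ^ 2 - g ω ^ 2) / 2 := by
    funext ω; ring
  rw [this]
  exact ((h1.sub hf.integrable_sq).sub hg.integrable_sq).div_const 2

lemma quad_eq {Ω : Type*} [MeasurableSpace Ω] (μ : Measure Ω) {d : ℕ}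
    (Z : Ω → Fin d → ℝ) (hZ : ∀ i, MemLp (fun ω => Z ω i) 2 μ) (v : Fin d → ℝ) :
    v ⬝ᵥ ((Matrix.of fun i j => ∫ ω, Z ω i * Z ω j ∂μ) *ᵥ v)
      = ∫ ω, (∑ i, v i * Z ω i) ^ 2 ∂μ := by
  have hint : ∀ i j : Fin d, Integrable (fun ω => Z ω i * Z ω j) μ :=
    fun i j => int_mul2 (hZ i) (hZ j)
  have hptw : ∀ ω, (∑ i, v i * Z ω i) ^ 2
      = ∑ i, ∑ j, v i * v j * (Z ω i * Z ω j) := by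
    intro ω
    rw [sq, Finset.sum_mul_sum]
    exact Finset.sum_congr rfl fun i _ => Finset.sum_congr rfl fun j _ => by ring
  have hrhs : ∫ ω, (∑ i, v i * Z ω i) ^ 2 ∂μ
      = ∑ i, ∑ j, v i * v j * ∫ ω, Z ω i * Z ω j ∂μ := by
    simp_rw [hptw]
    rw [integral_finset_sum _ (fun i _ =>
      integrable_finset_sum _ fun j _ => ((hint i j).const_mul _))]
    refine Finset.sum_congr rfl fun i _ => ?_
    rw [integral_finset_sum _ (fun j _ => ((hint i j).const_mul _))]
    exact Finset.sum_congr rfl fun j _ => integral_const_mul _ _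
  rw [hrhs]
  simp only [dotProduct, mulVec, Matrix.of_apply, Finset.mul_sum]
  exact Finset.sum_congr rfl fun i _ => Finset.sum_congr rfl fun j _ => by
    ring

lemma norm_le_of_contract {d : ℕ} (A : Matrix (Fin d) (Fin d) ℝ)
    (h : ((1 : Matrix (Fin d) (Fin d) ℝ) - Aᵀ * A).PosSemidef) : specNorm A ≤ 1 := by
  refine ContinuousLinearMap.opNorm_le_bound _ zero_le_one fun x => ?_
  rw [one_mul]
  set v : Fin d → ℝ := fun i => x i with hv
  have hkey : (A *ᵥ v) ⬝ᵥ (A *ᵥ v) ≤ v ⬝ᵥ v := by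
    have h0 := h.dotProduct_mulVec_nonneg v
    rw [star_trivial, sub_mulVec, one_mulVec, dotProduct_sub] at h0
    have : v ⬝ᵥ ((Aᵀ * A) *ᵥ v) = (A *ᵥ v) ⬝ᵥ (A *ᵥ v) := by
      rw [← mulVec_mulVec, dotProduct_mulVec, vecMul_transpose]
    linarith [h0, this ▸ h0]
  have happ : ∀ i, (Matrix.toEuclideanCLM (𝕜 := ℝ) A x) i = (A *ᵥ v) i := fun i => rfl
  rw [EuclideanSpace.norm_eq, EuclideanSpace.norm_eq]
  apply Real.sqrt_le_sqrt
  simp only [happ, Real.norm_eq_abs, sq_abs]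
  simpa [dotProduct, sq] using hkey

lemma sqrt_expr_props {d : ℕ} {A : Matrix (Fin d) (Fin d) ℝ} (h : A.PosSemidef) :
    ((h.1.eigenvectorUnitary : Matrix (Fin d) (Fin d) ℝ) *
      diagonal (fun i => Real.sqrt (h.1.eigenvalues i)) *
      (star h.1.eigenvectorUnitary : Matrix (Fin d) (Fin d) ℝ)) *
    ((h.1.eigenvectorUnitary : Matrix (Fin d) (Fin d) ℝ) *
      diagonal (fun i => Real.sqrt (h.1.eigenvalues i)) *
      (star h.1.eigenvectorUnitary : Matrix (Fin d) (Fin d) ℝ)) = A ∧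
    ((h.1.eigenvectorUnitary : Matrix (Fin d) (Fin d) ℝ) *
      diagonal (fun i => Real.sqrt (h.1.eigenvalues i)) *
      (star h.1.eigenvectorUnitary : Matrix (Fin d) (Fin d) ℝ))ᵀ =
    ((h.1.eigenvectorUnitary : Matrix (Fin d) (Fin d) ℝ) *
      diagonal (fun i => Real.sqrt (h.1.eigenvalues i)) *
      (star h.1.eigenvectorUnitary : Matrix (Fin d) (Fin d) ℝ)) := by
  have hUU : (star h.1.eigenvectorUnitary : Matrix (Fin d) (Fin d) ℝ) *
      (h.1.eigenvectorUnitary : Matrix (Fin d) (Fin d) ℝ) = 1 := Unitary.coe_star_mul_self _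
  have hDD : diagonal (fun i => Real.sqrt (h.1.eigenvalues i)) *
      diagonal (fun i => Real.sqrt (h.1.eigenvalues i)) =
      diagonal (RCLike.ofReal ∘ h.1.eigenvalues) := by
    rw [diagonal_mul_diagonal]
    congr 1
    funext i
    simp [Real.mul_self_sqrt (h.eigenvalues_nonneg i)]
  constructor
  · conv_rhs => rw [h.1.spectral_theorem]
    rw [Unitary.conjStarAlgAut_apply]
    simp only [Matrix.mul_assoc]
    rw [← Matrix.mul_assoc (star _ : Matrix (Fin d) (Fin d) ℝ) _ (diagonal _ * _), hUU,
      Matrix.one_mul, ← Matrix.mul_assoc (diagonal _) (diagonal _), hDD]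
  · rw [star_eq_conjTranspose, conjTranspose_eq_transpose_of_trivial,
      transpose_mul, transpose_mul, transpose_transpose, diagonal_transpose, Matrix.mul_assoc]

lemma part2aux {d : ℕ} {P Q M : Matrix (Fin d) (Fin d) ℝ} (hP : P.PosDef) (hQ : Q.PosDef)
    (h : (Q - Mᵀ * P * M).PosSemidef) :
    specNorm (msqrt P * M * (msqrt Q)⁻¹) ≤ 1 := by
  have hPsd := hP.posSemidef
  have hQsd := hQ.posSemidef
  set S := (hPsd.1.eigenvectorUnitary : Matrix (Fin d) (Fin d) ℝ) *
      diagonal (fun i => Real.sqrt (hPsd.1.eigenvalues i)) *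
      (star hPsd.1.eigenvectorUnitary : Matrix (Fin d) (Fin d) ℝ) with hS
  set T := (hQsd.1.eigenvectorUnitary : Matrix (Fin d) (Fin d) ℝ) *
      diagonal (fun i => Real.sqrt (hQsd.1.eigenvalues i)) *
      (star hQsd.1.eigenvectorUnitary : Matrix (Fin d) (Fin d) ℝ) with hT
  have hmP : msqrt P = S := dif_pos hPsd
  have hmQ : msqrt Q = T := dif_pos hQsd
  have hTT : T * T = Q := (sqrt_expr_props hQsd).1
  have hTsymm : Tᵀ = T := (sqrt_expr_props hQsd).2
  have hSsymm : Sᵀ = S := (sqrt_expr_props hPsd).2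
  have hSS : S * S = P := (sqrt_expr_props hPsd).1
  have hdet : T.det ≠ 0 := by
    intro h0
    have : T.det * T.det = Q.det := by rw [← det_mul, hTT]
    rw [h0, mul_zero] at this
    exact (ne_of_gt hQ.det_pos) this.symm
  have hunit : IsUnit T.det := isUnit_iff_ne_zero.mpr hdet
  have hTinv : T⁻¹ * T = 1 := nonsing_inv_mul T hunit
  have hTinv' : T * T⁻¹ = 1 := mul_nonsing_inv T hunit
  have hTinvT : (T⁻¹)ᵀ = T⁻¹ := by
    rw [transpose_nonsing_inv, hTsymm]
  rw [hmP, hmQ]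
  apply norm_le_of_contract
  have hconj := h.conjTranspose_mul_mul_same T⁻¹
  rw [conjTranspose_eq_transpose_of_trivial, hTinvT] at hconj
  have heq : T⁻¹ * (Q - Mᵀ * P * M) * T⁻¹
      = 1 - (S * M * T⁻¹)ᵀ * (S * M * T⁻¹) := by
    rw [transpose_mul, transpose_mul, hSsymm, hTinvT]
    rw [Matrix.mul_sub, Matrix.sub_mul, ← hTT, ← hSS]
    have h1 : T⁻¹ * (T * T) * T⁻¹ = 1 := by
      rw [← Matrix.mul_assoc, hTinv, Matrix.one_mul, hTinv']
    rw [h1]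
    simp only [Matrix.mul_assoc]
  rwa [heq] at hconj

theorem conditional_expectation_second_moment_domination
    {Ω : Type*} [m0 : MeasurableSpace Ω] (μ : Measure Ω) [IsProbabilityMeasure μ]
    {d : ℕ} (mG : MeasurableSpace Ω) (hmG : mG ≤ m0)
    (X Y : Ω → Fin d → ℝ)
    (hXmeas : ∀ i, Measurable[mG] fun ω => X ω i)
    (hX2 : ∀ i, MemLp (fun ω => X ω i) 2 μ)
    (hY2 : ∀ i, MemLp (fun ω => Y ω i) 2 μ)
    (M : Matrix (Fin d) (Fin d) ℝ)
    (hcond : ∀ i, μ[fun ω => Y ω i | mG] =ᵐ[μ] fun ω => (Mᵀ *ᵥ X ω) i) :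
    ((Matrix.of fun i j => ∫ ω, Y ω i * Y ω j ∂μ)
        - Mᵀ * (Matrix.of fun i j => ∫ ω, X ω i * X ω j ∂μ) * M).PosSemidef ∧
      ((Matrix.of fun i j => ∫ ω, X ω i * X ω j ∂μ : Matrix (Fin d) (Fin d) ℝ).PosDef →
        (Matrix.of fun i j => ∫ ω, Y ω i * Y ω j ∂μ : Matrix (Fin d) (Fin d) ℝ).PosDef →
        specNorm (msqrt (Matrix.of fun i j => ∫ ω, X ω i * X ω j ∂μ) * M *
            (msqrt (Matrix.of fun i j => ∫ ω, Y ω i * Y ω j ∂μ))⁻¹) ≤ 1) := by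
  set CX : Matrix (Fin d) (Fin d) ℝ := Matrix.of fun i j => ∫ ω, X ω i * X ω j ∂μ with hCX
  set CY : Matrix (Fin d) (Fin d) ℝ := Matrix.of fun i j => ∫ ω, Y ω i * Y ω j ∂μ with hCY
  haveI : SigmaFinite (μ.trim hmG) := inferInstance
  -- main inequality
  have main : ∀ v : Fin d → ℝ,
      ∫ ω, (∑ i, (M *ᵥ v) i * X ω i) ^ 2 ∂μ ≤ ∫ ω, (∑ i, v i * Y ω i) ^ 2 ∂μ := by
    intro v
    set f : Ω → ℝ := fun ω => ∑ i, v i * Y ω i with hfdef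
    set g : Ω → ℝ := fun ω => ∑ i, (M *ᵥ v) i * X ω i with hgdef
    have hf2 : MemLp f 2 μ := memLp_finset_sum _ fun i _ => (hY2 i).const_mul _
    have hg2 : MemLp g 2 μ := memLp_finset_sum _ fun i _ => (hX2 i).const_mul _
    have hgsm : StronglyMeasurable[mG] g := by
      apply Measurable.stronglyMeasurable
      exact Finset.measurable_sum _ fun i _ => ((hXmeas i).const_mul _)
    have hint_i : ∀ i : Fin d, Integrable (fun ω => v i * Y ω i) μ :=
      fun i => ((hY2 i).integrable one_le_two).const_mul _
    -- conditional expectation of f is g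
    have hcondf : μ[f|mG] =ᵐ[μ] g := by
      have hsum : f = ∑ i : Fin d, fun ω => v i * Y ω i := by
        funext ω; simp [hfdef]
      have h1 : μ[f|mG] =ᵐ[μ] ∑ i : Fin d, μ[fun ω => v i * Y ω i|mG] := by
        rw [hsum]
        exact condExp_finset_sum (fun i _ => hint_i i) mG
      have h2 : ∀ i : Fin d,
          μ[fun ω => v i * Y ω i|mG] =ᵐ[μ] fun ω => v i * (Mᵀ *ᵥ X ω) i := by
        intro i
        have hs : μ[fun ω => v i * Y ω i|mG]
            =ᵐ[μ] (v i) • μ[fun ω => Y ω i|mG] :=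
          condExp_smul (v i) (fun ω => Y ω i) mG
        refine hs.trans ?_
        filter_upwards [hcond i] with ω hω
        simp [hω]
      have h3 : (∑ i : Fin d, μ[fun ω => v i * Y ω i|mG]) =ᵐ[μ]
          fun ω => ∑ i, v i * (Mᵀ *ᵥ X ω) i := by
        have hall : ∀ᵐ ω ∂μ, ∀ i : Fin d,
            (μ[fun ω => v i * Y ω i|mG]) ω = v i * (Mᵀ *ᵥ X ω) i := by
          rw [ae_all_iff]; exact h2
        filter_upwards [hall] with ω hω
        simp only [Finset.sum_apply]
        exact Finset.sum_congr rfl fun i _ => hω i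
      have h4 : (fun ω => ∑ i, v i * (Mᵀ *ᵥ X ω) i) = g := by
        funext ω
        have hd := Matrix.dotProduct_mulVec v Mᵀ (X ω)
        rw [Matrix.vecMul_transpose] at hd
        simpa [dotProduct, hgdef] using hd
      exact h1.trans (h3.trans (by rw [h4]))
    have hff : Integrable (fun ω => f ω * f ω) μ := @int_mul2 Ω m0 μ _ _ hf2 hf2
    have hgf : Integrable (fun ω => g ω * f ω) μ := @int_mul2 Ω m0 μ _ _ hg2 hf2
    have hgg : Integrable (fun ω => g ω * g ω) μ := @int_mul2 Ω m0 μ _ _ hg2 hg2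
    have hpull : μ[fun ω => g ω * f ω|mG] =ᵐ[μ] fun ω => g ω * (μ[f|mG]) ω :=
      condExp_mul_of_stronglyMeasurable_left hgsm hgf (hf2.integrable one_le_two)
    have key : ∫ ω, g ω * f ω ∂μ = ∫ ω, g ω * g ω ∂μ := by
      calc ∫ ω, g ω * f ω ∂μ
          = ∫ ω, (μ[fun ω => g ω * f ω|mG]) ω ∂μ := (integral_condExp hmG).symm
        _ = ∫ ω, g ω * g ω ∂μ := by
            refine integral_congr_ae (hpull.trans ?_)
            filter_upwards [hcondf] with ω hω
            rw [hω]
    have hnn : 0 ≤ ∫ ω, (f ω - g ω) ^ 2 ∂μ := integral_nonneg fun ω => sq_nonneg _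
    have hexp : ∫ ω, (f ω - g ω) ^ 2 ∂μ
        = (∫ ω, f ω ^ 2 ∂μ - 2 * ∫ ω, g ω * f ω ∂μ) + ∫ ω, g ω * g ω ∂μ := by
      have hptw : (fun ω => (f ω - g ω) ^ 2)
          = fun ω => (f ω ^ 2 - 2 * (g ω * f ω)) + g ω * g ω := by funext ω; ring
      have ha : Integrable (fun ω => f ω ^ 2 - 2 * (g ω * f ω)) μ :=
        hf2.integrable_sq.sub (hgf.const_mul 2)
      rw [hptw, integral_add ha hgg,
        integral_sub hf2.integrable_sq (hgf.const_mul 2), integral_const_mul]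
    have hsq : ∫ ω, g ω ^ 2 ∂μ = ∫ ω, g ω * g ω ∂μ := by simp_rw [sq]
    have : ∫ ω, g ω ^ 2 ∂μ ≤ ∫ ω, f ω ^ 2 ∂μ := by linarith
    exact this
  -- Part 1: positive semidefiniteness
  have hherm : (CY - Mᵀ * CX * M).IsHermitian := by
    have hY : CY.IsHermitian := by
      rw [IsHermitian, conjTranspose_eq_transpose_of_trivial]
      ext i j
      simp only [transpose_apply, hCY, Matrix.of_apply]
      exact integral_congr_ae (Filter.Eventually.of_forall fun ω => mul_comm _ _)
    have hX : CX.IsHermitian := by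
      rw [IsHermitian, conjTranspose_eq_transpose_of_trivial]
      ext i j
      simp only [transpose_apply, hCX, Matrix.of_apply]
      exact integral_congr_ae (Filter.Eventually.of_forall fun ω => mul_comm _ _)
    have h2 : (Mᵀ * CX * M).IsHermitian := by
      have := isHermitian_conjTranspose_mul_mul M hX
      rwa [conjTranspose_eq_transpose_of_trivial] at this
    exact hY.sub h2
  have hpsd : (CY - Mᵀ * CX * M).PosSemidef := by
    refine PosSemidef.of_dotProduct_mulVec_nonneg hherm fun x => ?_
    rw [star_trivial, sub_mulVec, dotProduct_sub]
    have e1 : x ⬝ᵥ (CY *ᵥ x) = ∫ ω, (∑ i, x i * Y ω i) ^ 2 ∂μ := @quad_eq Ω m0 μ d Y hY2 x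
    have e2 : x ⬝ᵥ ((Mᵀ * CX * M) *ᵥ x)
        = ∫ ω, (∑ i, (M *ᵥ x) i * X ω i) ^ 2 ∂μ := by
      have hassoc : (Mᵀ * CX * M) *ᵥ x = Mᵀ *ᵥ (CX *ᵥ (M *ᵥ x)) := by
        rw [mulVec_mulVec, mulVec_mulVec]
      rw [hassoc, dotProduct_mulVec, vecMul_transpose]
      exact @quad_eq Ω m0 μ d X hX2 (M *ᵥ x)
    rw [e1, e2]
    exact sub_nonneg.mpr (main x)
  exact ⟨hpsd, fun hX hY => part2aux hX hY hpsd⟩
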